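/- arXiv:math/9904106 — 5 statements merged into one kernel-verified Lean document; each statement's English description precedes it below -/
import Mathlib

section
/- Let G and K be groups and n ≥ 1 a natural number. Suppose f, g : G → K are group homomorphisms such that f(x)·g(x)⁻¹ ∈ K_n for every x ∈ G. Then f(w)·g(w)⁻¹ ∈ K_{n+1} for every w in the commutator subgroup [G,G]. In particular, if K = G = F is a free group of finite rank and f, g are two endomorphisms of F lifting the same automorphism of F/F_n, then for any fixed element ω ∈ [F,F] one has f(ω) ∈ ω·F_{n+1} if and only if g(ω) ∈ ω·F_{n+1}. -/
/-!
Paper convention: the lower central series is `G₁ = G`, `G_{k+1} = [G,G_k]`,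
so `G_k = lowerCentralSeries G (k-1)` in Mathlib's indexing; in particular
`[G,G] = commutator G` and `K_{n+1} = lowerCentralSeries K n`.
-/

open scoped commutatorElement

private lemma aux_agree {G K : Type*} [Group G] [Group K] (m : ℕ)
    (f g : G →* K) (h : ∀ x : G, f x * (g x)⁻¹ ∈ (⊤ : Subgroup K).lowerCentralSeries m) :
    ∀ w ∈ commutator G, f w * (g w)⁻¹ ∈ (⊤ : Subgroup K).lowerCentralSeries (m + 1) := by
  set N := (⊤ : Subgroup K).lowerCentralSeries (m + 1) with hN
  let π := QuotientGroup.mk' N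
  have hc : ∀ x : G, π (f x * (g x)⁻¹) ∈ Subgroup.center (K ⧸ N) := by
    intro x
    rw [Subgroup.mem_center_iff]
    intro q
    induction q using QuotientGroup.induction_on with
    | H b =>
      have hmem : ⁅f x * (g x)⁻¹, b⁆ ∈ N := by
        rw [hN, Subgroup.lowerCentralSeries_succ]
        exact Subgroup.commutator_mem_commutator (h x) (Subgroup.mem_top b)
      have h1 : ⁅π (f x * (g x)⁻¹), π b⁆ = 1 := by
        rw [← map_commutatorElement]
        exact (QuotientGroup.eq_one_iff _).2 hmem
      exact (commutatorElement_eq_one_iff_commute.mp h1).symm.eq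
  let d : G →* Subgroup.center (K ⧸ N) :=
    { toFun := fun x => ⟨π (f x * (g x)⁻¹), hc x⟩
      map_one' := by ext; simp
      map_mul' := by
        intro x y
        ext
        have hy := (Subgroup.mem_center_iff.mp (hc y)) ((π (g x))⁻¹)
        push_cast
        simp only [map_mul, map_inv, mul_inv_rev] at hy ⊢
        calc π (f x) * π (f y) * ((π (g y))⁻¹ * (π (g x))⁻¹)
            = π (f x) * (π (f y) * (π (g y))⁻¹ * (π (g x))⁻¹) := by
              rw [mul_assoc, ← mul_assoc (π (f y))]
          _ = π (f x) * ((π (g x))⁻¹ * (π (f y) * (π (g y))⁻¹)) := by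
              rw [← hy]
          _ = π (f x) * (π (g x))⁻¹ * (π (f y) * (π (g y))⁻¹) := by
              rw [mul_assoc] }
  intro w hw
  have hker : w ∈ d.ker := by
    rw [commutator_eq_closure] at hw
    refine (Subgroup.closure_le _).2 ?_ hw
    rintro x ⟨p, q, rfl⟩
    rw [SetLike.mem_coe, MonoidHom.mem_ker, map_commutatorElement]
    exact commutatorElement_eq_one_iff_commute.mpr (Subtype.ext ((Subgroup.mem_center_iff.mp (d q).2) (d p).1))
  have : π (f w * (g w)⁻¹) = 1 := by
    have := Subtype.ext_iff.mp hker
    simpa [d] using this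
  exact (QuotientGroup.eq_one_iff _).mp this

private lemma aux_iff {K : Type*} [Group K] (N : Subgroup K) [N.Normal]
    {u v ω : K} (huv : u * v⁻¹ ∈ N) :
    ω⁻¹ * u ∈ N ↔ ω⁻¹ * v ∈ N := by
  have hvu : v⁻¹ * u ∈ N := by
    have := Subgroup.Normal.conj_mem ‹N.Normal› _ huv v⁻¹
    simpa [mul_assoc] using this
  constructor
  · intro h1
    have : (ω⁻¹ * u) * (v⁻¹ * u)⁻¹ ∈ N := N.mul_mem h1 (N.inv_mem hvu)
    simpa [mul_assoc] using this
  · intro h1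
    have : (ω⁻¹ * v) * (v⁻¹ * u) ∈ N := N.mul_mem h1 hvu
    simpa [mul_assoc] using this

/-- if `f, g : G → K` agree modulo `K_n`, then they agree modulo
`K_{n+1}` on the commutator subgroup `[G,G]`.  In particular, two endomorphisms
`f', g'` of a free group `F` of finite rank lifting the same automorphism `φ` of
`F/F_n` satisfy, for any `ω ∈ [F,F]`:
`f'(ω) ∈ ω·F_{n+1}` iff `g'(ω) ∈ ω·F_{n+1}`. -/
theorem agree_mod_next_on_commutator {G K : Type*} [Group G] [Group K]
    (n : ℕ) (hn : 1 ≤ n) (f g : G →* K)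
    (h : ∀ x : G, f x * (g x)⁻¹ ∈ (⊤ : Subgroup K).lowerCentralSeries (n - 1)) :
    (∀ w ∈ commutator G, f w * (g w)⁻¹ ∈ (⊤ : Subgroup K).lowerCentralSeries n) ∧
    (∀ (r : ℕ) (f' g' : FreeGroup (Fin r) →* FreeGroup (Fin r))
        (φ : MulAut (FreeGroup (Fin r) ⧸ (⊤ : Subgroup (FreeGroup (Fin r))).lowerCentralSeries (n - 1))),
      (∀ x : FreeGroup (Fin r),
        (QuotientGroup.mk (f' x) :
            FreeGroup (Fin r) ⧸ (⊤ : Subgroup (FreeGroup (Fin r))).lowerCentralSeries (n - 1)) =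
          φ (QuotientGroup.mk x)) →
      (∀ x : FreeGroup (Fin r),
        (QuotientGroup.mk (g' x) :
            FreeGroup (Fin r) ⧸ (⊤ : Subgroup (FreeGroup (Fin r))).lowerCentralSeries (n - 1)) =
          φ (QuotientGroup.mk x)) →
      ∀ ω ∈ commutator (FreeGroup (Fin r)),
        (ω⁻¹ * f' ω ∈ (⊤ : Subgroup (FreeGroup (Fin r))).lowerCentralSeries n ↔
          ω⁻¹ * g' ω ∈ (⊤ : Subgroup (FreeGroup (Fin r))).lowerCentralSeries n)) := by
  obtain ⟨m, rfl⟩ : ∃ m, n = m + 1 := ⟨n - 1, by omega⟩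
  simp only [Nat.add_sub_cancel] at h ⊢
  constructor
  · exact aux_agree m f g h
  · intro r f' g' φ hf hg ω hω
    have h0 : ∀ x : FreeGroup (Fin r),
        f' x * (g' x)⁻¹ ∈ (⊤ : Subgroup (FreeGroup (Fin r))).lowerCentralSeries m := by
      intro x
      have heq : (QuotientGroup.mk (f' x) :
          FreeGroup (Fin r) ⧸ (⊤ : Subgroup (FreeGroup (Fin r))).lowerCentralSeries (m + 1 - 1))
          = QuotientGroup.mk (g' x) := (hf x).trans (hg x).symm
      have h1 : (f' x)⁻¹ * g' x ∈ (⊤ : Subgroup (FreeGroup (Fin r))).lowerCentralSeries m :=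
        (QuotientGroup.eq).mp heq
      have h2 : (g' x)⁻¹ * f' x ∈ (⊤ : Subgroup (FreeGroup (Fin r))).lowerCentralSeries m := by
        simpa using ((⊤ : Subgroup (FreeGroup (Fin r))).lowerCentralSeries m).inv_mem h1
      have := Subgroup.Normal.conj_mem (inferInstance) _ h2 (f' x)
      simpa [mul_assoc] using this
    have key : f' ω * (g' ω)⁻¹ ∈ (⊤ : Subgroup (FreeGroup (Fin r))).lowerCentralSeries (m + 1) :=
      aux_agree m f' g' h0 ω hω
    exact aux_iff _ key
end

section
/- Let n ≥ 2 and let h be an automorphism of F/F_{n+1} that induces the identity automorphism of F/F_n. Then: (1) for every a ∈ F/F_{n+1}, the element a⁻¹·h(a) lies in the central subgroup F_n/F_{n+1} of F/F_{n+1}; (2) the assignment a ↦ a⁻¹·h(a) is a group homomorphism F/F_{n+1} → F_n/F_{n+1} which factors through the abelianization H = F/F₂ of F, yielding a homomorphism ψ_h : H → F_n/F_{n+1}; and (3) the assignment h ↦ ψ_h is an injective group homomorphism from the group of all automorphisms of F/F_{n+1} inducing the identity on F/F_n into the abelian group Hom(H, F_n/F_{n+1}). -/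
/-!
`Fg g` is the free group `F` on `2g` generators `x₁,…,x_g,y₁,…,y_g`
(`X g i = x_i`, `Y g i = y_i`), `omegaG g = [x₁,y₁]⋯[x_g,y_g]`.
Paper convention: `F_k = (⊤ : Subgroup (Fg g)).lowerCentralSeries (k-1)`, and
`Q g k = F/F_k`.  `IsA0 g k φ` says that the automorphism `φ` of `F/F_k`
lies in `A₀(F/F_k)`: some endomorphism of `F` lifting `φ` sends `ω_g`
into `ω_g·F_{k+1}`.
-/

open scoped commutatorElement

abbrev Fg (g : ℕ) := FreeGroup (Fin g × Bool)

def X (g : ℕ) (i : Fin g) : Fg g := FreeGroup.of (i, false)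

def Y (g : ℕ) (i : Fin g) : Fg g := FreeGroup.of (i, true)

def omegaG (g : ℕ) : Fg g := ((List.finRange g).map fun i => ⁅X g i, Y g i⁆).prod

/-- `F/F_k` in the paper's indexing of the lower central series. -/
abbrev Q (g k : ℕ) := Fg g ⧸ (⊤ : Subgroup (Fg g)).lowerCentralSeries (k - 1)

def mkQ (g k : ℕ) : Fg g →* Q g k := QuotientGroup.mk' _

/-- Membership in `A₀(F/F_k)`. -/
def IsA0 (g k : ℕ) (φ : MulAut (Q g k)) : Prop :=
  ∃ h : Fg g →* Fg g,
    (∀ a : Fg g, mkQ g k (h a) = φ (mkQ g k a)) ∧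
    (omegaG g)⁻¹ * h (omegaG g) ∈ (⊤ : Subgroup (Fg g)).lowerCentralSeries k

/-- The natural projection `F/F_{k+1} → F/F_k`. -/
def projQ (g k : ℕ) : Q g (k + 1) →* Q g k :=
  QuotientGroup.map _ _ (MonoidHom.id _)
    (fun x hx => Subgroup.lowerCentralSeries_antitone _ (Nat.sub_le k 1) hx)

/-- The subgroup `F_n/F_{n+1}` of `F/F_{n+1}`. -/
def Kn (g n : ℕ) : Subgroup (Q g (n + 1)) :=
  ((⊤ : Subgroup (Fg g)).lowerCentralSeries (n - 1)).map (mkQ g (n + 1))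

/-- `h` induces the identity automorphism of `F/F_n`. -/
def InducesId (g n : ℕ) (h : MulAut (Q g (n + 1))) : Prop :=
  ∀ a : Fg g, projQ g n (h (mkQ g (n + 1) a)) = mkQ g n a

section aux
variable {G : Type*} [Group G]

lemma comm_left_central (a c u : G) (hu : u ∈ Subgroup.center G) : ⁅a * u, c⁆ = ⁅a, c⁆ := by
  have hu' := Subgroup.mem_center_iff.mp hu
  simp only [commutatorElement_def, mul_inv_rev]
  have huc : u * c * u⁻¹ = c := by
    rw [← hu' c, mul_assoc, mul_inv_cancel, mul_one]
  calc a * u * c * (u⁻¹ * a⁻¹) * c⁻¹ = a * (u * c * u⁻¹) * a⁻¹ * c⁻¹ := by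
        simp [mul_assoc]
    _ = a * c * a⁻¹ * c⁻¹ := by rw [huc]

lemma comm_mul_central (a b u v : G) (hu : u ∈ Subgroup.center G)
    (hv : v ∈ Subgroup.center G) : ⁅a * u, b * v⁆ = ⁅a, b⁆ := by
  rw [comm_left_central a (b*v) u hu, ← commutatorElement_inv,
    comm_left_central b a v hv, commutatorElement_inv]

end aux

lemma central1 (g n : ℕ) (hn : 2 ≤ n) : Kn g n ≤ Subgroup.center (Q g (n + 1)) := by
  rintro q ⟨x, hx, rfl⟩
  rw [Subgroup.mem_center_iff]
  intro r
  induction r using QuotientGroup.induction_on with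
  | H y =>
    show QuotientGroup.mk (y * x) = QuotientGroup.mk (x * y)
    rw [QuotientGroup.eq]
    have h1 : n - 1 + 1 = n := by omega
    have h2 : (y * x)⁻¹ * (x * y) = ⁅x⁻¹, y⁻¹⁆ := by group
    have h3 : ⁅x⁻¹, y⁻¹⁆ ∈ (⊤ : Subgroup (Fg g)).lowerCentralSeries n := by
      rw [← h1, Subgroup.lowerCentralSeries_succ]
      exact Subgroup.commutator_mem_commutator (inv_mem hx) (Subgroup.mem_top _)
    rw [h2]
    simpa using h3

lemma delta_mem (g n : ℕ) (h : MulAut (Q g (n + 1))) (hh : InducesId g n h) :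
    ∀ a : Q g (n + 1), a⁻¹ * h a ∈ Kn g n := by
  intro a
  induction a using QuotientGroup.induction_on with
  | H x =>
    obtain ⟨z, hz⟩ := QuotientGroup.mk'_surjective
      ((⊤ : Subgroup (Fg g)).lowerCentralSeries ((n+1) - 1)) (h (mkQ g (n+1) x))
    have hz' : (QuotientGroup.mk z : Q g (n + 1)) = h (QuotientGroup.mk x) := hz
    have key : (QuotientGroup.mk z : Q g n) = QuotientGroup.mk x := by
      have := hh x
      rw [← hz] at this
      exact this
    have hmem : x⁻¹ * z ∈ (⊤ : Subgroup (Fg g)).lowerCentralSeries (n - 1) := by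
      have h4 := QuotientGroup.eq.mp key
      have : x⁻¹ * z = (z⁻¹ * x)⁻¹ := by group
      rw [this]
      exact inv_mem h4
    refine ⟨x⁻¹ * z, hmem, ?_⟩
    show (QuotientGroup.mk (x⁻¹ * z) : Q g (n+1)) = _
    rw [← hz']
    simp [mkQ]

lemma delta_hom (g n : ℕ) (hn : 2 ≤ n) (h : MulAut (Q g (n + 1))) (hh : InducesId g n h) :
    ∀ a b : Q g (n + 1), (a * b)⁻¹ * h (a * b) = (a⁻¹ * h a) * (b⁻¹ * h b) := by
  intro a b
  have hu : a⁻¹ * h a ∈ Subgroup.center _ := central1 g n hn (delta_mem g n h hh a)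
  have comm := Subgroup.mem_center_iff.mp hu b⁻¹
  have e1 : (a * b)⁻¹ * h (a * b) = b⁻¹ * (a⁻¹ * h a) * h b := by
    rw [map_mul]; group
  rw [e1, comm, mul_assoc]

lemma fixes_Kn (g n : ℕ) (hn : 2 ≤ n) (h : MulAut (Q g (n + 1))) (hh : InducesId g n h) :
    ∀ q ∈ Kn g n, h q = q := by
  have hle : Kn g n ≤ MonoidHom.eqLocus (h : Q g (n+1) →* Q g (n+1)) (MonoidHom.id _) := by
    have h1 : n - 1 = (n - 2) + 1 := by omega
    have h2 : (⊤ : Subgroup (Fg g)).lowerCentralSeries (n - 2 + 1) =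
        ⁅(⊤ : Subgroup (Fg g)).lowerCentralSeries (n - 2), ⊤⁆ := rfl
    rw [Kn, h1, h2, Subgroup.map_commutator, Subgroup.commutator_le]
    rintro p ⟨x, hx, rfl⟩ q ⟨y, -, rfl⟩
    show h ⁅mkQ g (n+1) x, mkQ g (n+1) y⁆ = ⁅mkQ g (n+1) x, mkQ g (n+1) y⁆
    rw [map_commutatorElement]
    have hu := central1 g n hn (delta_mem g n h hh (mkQ g (n+1) x))
    have hv := central1 g n hn (delta_mem g n h hh (mkQ g (n+1) y))
    have ex : h (mkQ g (n+1) x) = mkQ g (n+1) x * ((mkQ g (n+1) x)⁻¹ * h (mkQ g (n+1) x)) := by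
      group
    have ey : h (mkQ g (n+1) y) = mkQ g (n+1) y * ((mkQ g (n+1) y)⁻¹ * h (mkQ g (n+1) y)) := by
      group
    rw [ex, ey, comm_mul_central _ _ _ _ hu hv]
  exact fun q hq => hle hq


/-- for an automorphism `h` of `F/F_{n+1}` inducing the identity on
`F/F_n`: (1) `a⁻¹·h(a)` lies in the central subgroup `F_n/F_{n+1}`;
(2) `a ↦ a⁻¹·h(a)` is a homomorphism factoring through the abelianization
`H = F/F₂`, giving `ψ_h : H → F_n/F_{n+1}`; (3) `h ↦ ψ_h` is an injective
group homomorphism into `Hom(H, F_n/F_{n+1})`. -/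

theorem johnson_map_of_aut (g n : ℕ) (hg : 1 ≤ g) (hn : 2 ≤ n) :
    -- `F_n/F_{n+1}` is a central subgroup of `F/F_{n+1}`
    Kn g n ≤ Subgroup.center (Q g (n + 1)) ∧
    -- (1) and (2)
    (∀ h : MulAut (Q g (n + 1)), InducesId g n h →
      (∀ a : Q g (n + 1), a⁻¹ * h a ∈ Kn g n) ∧
      (∀ a b : Q g (n + 1), (a * b)⁻¹ * h (a * b) = (a⁻¹ * h a) * (b⁻¹ * h b)) ∧
      (∃ ψ : Abelianization (Fg g) →* Q g (n + 1),
        ∀ a : Fg g,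
          ψ (Abelianization.of a) = (mkQ g (n + 1) a)⁻¹ * h (mkQ g (n + 1) a))) ∧
    -- (3) homomorphism property: `ψ_{h₁∘h₂} = ψ_{h₁}·ψ_{h₂}` pointwise
    (∀ h₁ h₂ : MulAut (Q g (n + 1)), InducesId g n h₁ → InducesId g n h₂ →
      ∀ a : Q g (n + 1), a⁻¹ * (h₁ * h₂) a = (a⁻¹ * h₁ a) * (a⁻¹ * h₂ a)) ∧
    -- (3) injectivity
    (∀ h₁ h₂ : MulAut (Q g (n + 1)), InducesId g n h₁ → InducesId g n h₂ →
      (∀ a : Q g (n + 1), a⁻¹ * h₁ a = a⁻¹ * h₂ a) → h₁ = h₂) := by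
  refine ⟨central1 g n hn, ?_, ?_, ?_⟩
  · intro h hh
    refine ⟨delta_mem g n h hh, delta_hom g n hn h hh, ?_⟩
    set d : Fg g →* Q g (n + 1) :=
      { toFun := fun a => (mkQ g (n + 1) a)⁻¹ * h (mkQ g (n + 1) a)
        map_one' := by simp
        map_mul' := fun a b => by
          show (mkQ g (n + 1) (a * b))⁻¹ * h (mkQ g (n + 1) (a * b)) =
            ((mkQ g (n + 1) a)⁻¹ * h (mkQ g (n + 1) a)) *
              ((mkQ g (n + 1) b)⁻¹ * h (mkQ g (n + 1) b))
          rw [map_mul]; exact delta_hom g n hn h hh _ _ } with hd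
    have hker : ∀ x ∈ commutator (Fg g), d x = 1 := by
      have : commutator (Fg g) ≤ d.ker := by
        rw [commutator_def, Subgroup.commutator_le]
        intro p _ q _
        rw [MonoidHom.mem_ker, map_commutatorElement]
        have hp := central1 g n hn (delta_mem g n h hh (mkQ g (n + 1) p))
        exact commutatorElement_eq_one_iff_commute.mpr
          ((Subgroup.mem_center_iff.mp hp (d q)).symm)
      exact fun x hx => this hx
    exact ⟨QuotientGroup.lift (commutator (Fg g)) d hker, fun a => rfl⟩
  · intro h₁ h₂ hh₁ hh₂ a
    have fix := fixes_Kn g n hn h₁ hh₁ _ (delta_mem g n h₂ hh₂ a)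
    have e : h₂ a = a * (a⁻¹ * h₂ a) := by group
    calc a⁻¹ * (h₁ * h₂) a = a⁻¹ * h₁ (a * (a⁻¹ * h₂ a)) := by
          rw [MulAut.mul_apply, ← e]
      _ = a⁻¹ * (h₁ a * h₁ (a⁻¹ * h₂ a)) := by rw [map_mul]
      _ = a⁻¹ * (h₁ a * (a⁻¹ * h₂ a)) := by rw [fix]
      _ = (a⁻¹ * h₁ a) * (a⁻¹ * h₂ a) := by rw [← mul_assoc, ← mul_assoc]
  · intro h₁ h₂ _ _ heq
    exact MulEquiv.ext fun a => mul_left_cancel (heq a)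
end

section
/- Let A be an associative (not necessarily commutative) ring and δ : A → A an additive map satisfying δ(x·y) = δ(x)·y − x·δ(y) for all x, y ∈ A. Let n ≥ 2 and suppose given elements a_{ij} ∈ A for all pairs 1 ≤ i < j ≤ n+2 with (i,j) ∉ {(1,n+1), (2,n+2), (1,n+2)}, satisfying δ(a_{rs}) = Σ_{r<i<s} a_{ri}·a_{is} for each such pair (r,s) (in particular δ(a_{i,i+1}) = 0, the sum being empty). Set b_{1,n+1} = Σ_{1<i<n+1} a_{1i}·a_{i,n+1} and b_{2,n+2} = Σ_{2<i<n+2} a_{2i}·a_{i,n+2}. Then a_{12}·b_{2,n+2} − b_{1,n+1}·a_{n+1,n+2} = δ( Σ_{2<i<n+1} a_{1i}·a_{i,n+2} ). -/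
/-- the algebraic identity behind
`α₁ ⌣ ⟨α₂,…,α_{n+1}⟩ = ⟨α₁,…,α_n⟩ ⌣ α_{n+1}`.  Here `δ` is an additive map
satisfying `δ(xy) = δ(x)y − xδ(y)`, and `a i j` (for `1 ≤ i < j ≤ n+2`,
`(i,j) ∉ {(1,n+1),(2,n+2),(1,n+2)}`) is a defining system:
`δ(a r s) = Σ_{r<i<s} (a r i)(a i s)`. -/
theorem massey_symmetry_identity {A : Type*} [Ring A] (δ : A →+ A)
    (hδ : ∀ x y : A, δ (x * y) = δ x * y - x * δ y)
    (n : ℕ) (hn : 2 ≤ n) (a : ℕ → ℕ → A)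
    (ha : ∀ r s : ℕ, 1 ≤ r → r < s → s ≤ n + 2 →
      (r, s) ≠ (1, n + 1) → (r, s) ≠ (2, n + 2) → (r, s) ≠ (1, n + 2) →
      δ (a r s) = ∑ i ∈ Finset.Ioo r s, a r i * a i s) :
    a 1 2 * (∑ i ∈ Finset.Ioo 2 (n + 2), a 2 i * a i (n + 2)) -
      (∑ i ∈ Finset.Ioo 1 (n + 1), a 1 i * a i (n + 1)) * a (n + 1) (n + 2) =
    δ (∑ i ∈ Finset.Ioo 2 (n + 1), a 1 i * a i (n + 2)) := by
  classical
  have key : ∀ i ∈ Finset.Ioo 2 (n + 1), δ (a 1 i * a i (n + 2)) =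
      (∑ j ∈ Finset.Ioo 1 i, a 1 j * a j i) * a i (n + 2)
        - a 1 i * ∑ j ∈ Finset.Ioo i (n + 2), a i j * a j (n + 2) := by
    intro i hi
    simp only [Finset.mem_Ioo] at hi
    rw [hδ,
      ha 1 i (by omega) (by omega) (by omega)
        (by simp only [ne_eq, Prod.mk.injEq, not_and]; omega)
        (by simp only [ne_eq, Prod.mk.injEq, not_and]; omega)
        (by simp only [ne_eq, Prod.mk.injEq, not_and]; omega),
      ha i (n + 2) (by omega) (by omega) (by omega)
        (by simp only [ne_eq, Prod.mk.injEq, not_and]; omega)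
        (by simp only [ne_eq, Prod.mk.injEq, not_and]; omega)
        (by simp only [ne_eq, Prod.mk.injEq, not_and]; omega)]
  rw [map_sum, Finset.sum_congr rfl key, Finset.sum_sub_distrib]
  -- split sums
  have hB : Finset.Ioo 2 (n + 2) = insert (n + 1) (Finset.Ioo 2 (n + 1)) := by
    ext x; simp [Finset.mem_Ioo]; omega
  have hC : Finset.Ioo 1 (n + 1) = insert 2 (Finset.Ioo 2 (n + 1)) := by
    ext x; simp [Finset.mem_Ioo]; omega
  rw [hB, hC, Finset.sum_insert (by simp), Finset.sum_insert (by simp)]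
  have hP : ∀ i ∈ Finset.Ioo 2 (n + 1),
      (∑ j ∈ Finset.Ioo 1 i, a 1 j * a j i) * a i (n + 2) =
      a 1 2 * (a 2 i * a i (n + 2)) + ∑ j ∈ Finset.Ioo 2 i, a 1 j * (a j i * a i (n + 2)) := by
    intro i hi
    simp only [Finset.mem_Ioo] at hi
    have : Finset.Ioo 1 i = insert 2 (Finset.Ioo 2 i) := by
      ext x; simp [Finset.mem_Ioo]; omega
    rw [this, Finset.sum_insert (by simp), add_mul, Finset.sum_mul]
    simp [mul_assoc]
  have hQ : ∀ i ∈ Finset.Ioo 2 (n + 1),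
      a 1 i * ∑ j ∈ Finset.Ioo i (n + 2), a i j * a j (n + 2) =
      a 1 i * (a i (n + 1) * a (n + 1) (n + 2))
        + ∑ j ∈ Finset.Ioo i (n + 1), a 1 i * (a i j * a j (n + 2)) := by
    intro i hi
    simp only [Finset.mem_Ioo] at hi
    have : Finset.Ioo i (n + 2) = insert (n + 1) (Finset.Ioo i (n + 1)) := by
      ext x; simp [Finset.mem_Ioo]; omega
    rw [this, Finset.sum_insert (by simp), mul_add, Finset.mul_sum]
  rw [Finset.sum_congr rfl hP, Finset.sum_congr rfl hQ,
    Finset.sum_add_distrib, Finset.sum_add_distrib]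
  have hswap : ∑ i ∈ Finset.Ioo 2 (n + 1), ∑ j ∈ Finset.Ioo 2 i,
        a 1 j * (a j i * a i (n + 2)) =
      ∑ i ∈ Finset.Ioo 2 (n + 1), ∑ j ∈ Finset.Ioo i (n + 1),
        a 1 i * (a i j * a j (n + 2)) := by
    rw [Finset.sum_comm' (t' := Finset.Ioo 2 (n + 1)) (s' := fun j => Finset.Ioo j (n + 1))
      (by intro x y; simp [Finset.mem_Ioo]; omega)]
  rw [hswap]
  simp only [mul_add, Finset.mul_sum, add_mul, Finset.sum_mul, mul_assoc]
  abel
end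

section
/- Let F be a free group, π any group, n ≥ 2, and let p : F → π be an n-equivalence, i.e., p induces an isomorphism F/F_n ≅ π/π_n. Then the induced homomorphism F_n/F_{n+1} → π_n/π_{n+1} is surjective. -/
open scoped Pointwise
open scoped commutatorElement


/-!
Paper convention: `G_k = (⊤ : Subgroup G).lowerCentralSeries (k-1)`; `inducedQuotMap f (k-1)` is the
homomorphism `G/G_k → H/H_k` induced by `f : G →* H`.  A homomorphism `p` is an
`n`-equivalence iff `inducedQuotMap p (n-1)` is bijective.
-/

theorem lcs_map_le {G H : Type*} [Group G] [Group H] (f : G →* H) (k : ℕ) :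
    ((⊤ : Subgroup G).lowerCentralSeries k).map f ≤ (⊤ : Subgroup H).lowerCentralSeries k := by
  induction k with
  | zero => exact le_top
  | succ k ih =>
    show Subgroup.map f ⁅(⊤ : Subgroup G).lowerCentralSeries k, ⊤⁆ ≤ ⁅(⊤ : Subgroup H).lowerCentralSeries k, ⊤⁆
    rw [Subgroup.map_commutator]
    exact Subgroup.commutator_mono ih le_top

/-- The homomorphism `G/lcs G k → H/lcs H k` induced by `f`. -/
def inducedQuotMap {G H : Type*} [Group G] [Group H] (f : G →* H) (k : ℕ) :
    G ⧸ (⊤ : Subgroup G).lowerCentralSeries k →* H ⧸ (⊤ : Subgroup H).lowerCentralSeries k :=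
  QuotientGroup.map _ _ f
    (fun x hx => Subgroup.mem_comap.mpr (lcs_map_le f k (Subgroup.mem_map_of_mem f hx)))

theorem aux_comm {Q : Type*} [Group Q] (g c h d : Q)
    (hc : c * (h * d) = (h * d) * c) (hdg : d * g⁻¹ = g⁻¹ * d) : ⁅g * c, h * d⁆ = ⁅g, h⁆ := by
  rw [commutatorElement_def, commutatorElement_def]
  calc g * c * (h * d) * (g * c)⁻¹ * (h * d)⁻¹
      = g * (c * (h * d)) * (c⁻¹ * g⁻¹) * (h * d)⁻¹ := by group
    _ = g * ((h * d) * c) * (c⁻¹ * g⁻¹) * (h * d)⁻¹ := by rw [hc]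
    _ = g * h * (d * g⁻¹) * d⁻¹ * h⁻¹ := by group
    _ = g * h * (g⁻¹ * d) * d⁻¹ * h⁻¹ := by rw [hdg]
    _ = g * h * g⁻¹ * h⁻¹ := by group

/-- if `p : F → π` is an `n`-equivalence from a free group, then the
induced map `F_n/F_{n+1} → π_n/π_{n+1}` is surjective. -/
theorem lcs_quotient_surjective_of_equivalence {α π : Type*} [Group π]
    (n : ℕ) (hn : 2 ≤ n) (p : FreeGroup α →* π)
    (hp : Function.Bijective (inducedQuotMap p (n - 1))) :
    ∀ z ∈ (⊤ : Subgroup π).lowerCentralSeries (n - 1),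
      ∃ w ∈ (⊤ : Subgroup (FreeGroup α)).lowerCentralSeries (n - 1),
        (p w)⁻¹ * z ∈ (⊤ : Subgroup π).lowerCentralSeries n := by
  obtain ⟨m, rfl⟩ : ∃ m, n = m + 1 := ⟨n - 1, by omega⟩
  have hm : 1 ≤ m := by omega
  simp only [Nat.add_sub_cancel] at hp ⊢
  -- every element of π is (p x) * d with d ∈ lcs π m
  have hbase : ∀ b : π, ∃ x : FreeGroup α, (p x)⁻¹ * b ∈ (⊤ : Subgroup π).lowerCentralSeries m := by
    intro b
    obtain ⟨y, hy⟩ := hp.2 ((b : π ⧸ (⊤ : Subgroup π).lowerCentralSeries m))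
    obtain ⟨x, rfl⟩ := QuotientGroup.mk_surjective y
    refine ⟨x, ?_⟩
    have : ((p x : π) : π ⧸ (⊤ : Subgroup π).lowerCentralSeries m) = (b : π ⧸ (⊤ : Subgroup π).lowerCentralSeries m) := hy
    exact QuotientGroup.eq.mp this
  -- main claim
  have claim : ∀ k, k + 1 ≤ m + 1 →
      (⊤ : Subgroup π).lowerCentralSeries k ≤
        ((⊤ : Subgroup (FreeGroup α)).lowerCentralSeries k).map p ⊔ (⊤ : Subgroup π).lowerCentralSeries (k + 1) := by
    intro k
    induction k with
    | zero =>
      intro _ y _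
      obtain ⟨x, hx⟩ := hbase y
      have hy : y = p x * ((p x)⁻¹ * y) := by group
      rw [hy]
      refine mul_mem (Subgroup.mem_sup_left ?_) (Subgroup.mem_sup_right ?_)
      · exact Subgroup.mem_map_of_mem p (by rw [Subgroup.lowerCentralSeries_zero]; trivial)
      · exact Subgroup.lowerCentralSeries_antitone _ hm hx
    | succ k ih =>
      intro hk
      show ⁅(⊤ : Subgroup π).lowerCentralSeries k, ⊤⁆ ≤ _
      rw [Subgroup.commutator_le]
      intro a ha b _
      have ha' := ih (by omega) ha
      have hamem : a ∈ (((((⊤ : Subgroup (FreeGroup α)).lowerCentralSeries k).map p : Subgroup π) : Set π) *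
          (((⊤ : Subgroup π).lowerCentralSeries (k + 1) : Subgroup π) : Set π)) := by
        rw [← Subgroup.mul_normal]; exact ha'
      obtain ⟨u, hu, c, hc, hac⟩ := hamem
      obtain ⟨w, hw, rfl⟩ := hu
      obtain ⟨x, hx⟩ := hbase b
      set d : π := (p x)⁻¹ * b with hd
      have hb : b = p x * d := by rw [hd]; group
      set N := (⊤ : Subgroup π).lowerCentralSeries (k + 2) with hN
      set q := QuotientGroup.mk' N with hq
      have key : ((⊤ : Subgroup (FreeGroup α)).lowerCentralSeries (k + 1)).map p ⊔ N =
          Subgroup.comap q (Subgroup.map q (((⊤ : Subgroup (FreeGroup α)).lowerCentralSeries (k + 1)).map p)) := by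
        rw [Subgroup.comap_map_eq, QuotientGroup.ker_mk']
      rw [key, Subgroup.mem_comap]
      -- commuting facts in the quotient
      have hcb : q c * q b = q b * q c := by
        have h1 : ⁅c, b⁆ ∈ N := by
          show ⁅c, b⁆ ∈ ⁅(⊤ : Subgroup π).lowerCentralSeries (k + 1), ⊤⁆
          exact Subgroup.commutator_mem_commutator hc (Subgroup.mem_top b)
        have h2 : ⁅q c, q b⁆ = 1 := by
          rw [← map_commutatorElement]
          exact (QuotientGroup.eq_one_iff _).mpr h1
        exact commutatorElement_eq_one_iff_mul_comm.mp h2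
      have hwd : q (p w) * q d = q d * q (p w) := by
        have h1 : ⁅p w, d⁆ ∈ N := by
          have h3 : ⁅p w, d⁆ ∈ ⁅(⊤ : Subgroup π), (⊤ : Subgroup π).lowerCentralSeries m⁆ :=
            Subgroup.commutator_mem_commutator (Subgroup.mem_top _) hx
          have h4 : ⁅(⊤ : Subgroup π), (⊤ : Subgroup π).lowerCentralSeries m⁆ ≤ (⊤ : Subgroup π).lowerCentralSeries (m + 1) := by
            rw [Subgroup.commutator_comm]
            show ⁅(⊤ : Subgroup π).lowerCentralSeries m, ⊤⁆ ≤ ⁅(⊤ : Subgroup π).lowerCentralSeries m, ⊤⁆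
            exact le_rfl
          exact Subgroup.lowerCentralSeries_antitone _ (by omega : k + 2 ≤ m + 1) (h4 h3)
        have h2 : ⁅q (p w), q d⁆ = 1 := by
          rw [← map_commutatorElement]
          exact (QuotientGroup.eq_one_iff _).mpr h1
        exact commutatorElement_eq_one_iff_mul_comm.mp h2
      have hac' : p w * c = a := hac
      have ha2 : q a = q (p w) * q c := by rw [← map_mul, hac']
      have hb2 : q b = q (p x) * q d := by rw [← map_mul, ← hb]
      have hcc : q c * (q (p x) * q d) = (q (p x) * q d) * q c := by
        rw [← hb2]; exact hcb
      have hdd : q d * (q (p w))⁻¹ = (q (p w))⁻¹ * q d := by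
        have hcom : Commute (q (p w)) (q d) := hwd
        exact hcom.inv_left.eq.symm
      show q ⁅a, b⁆ ∈ _
      rw [map_commutatorElement, ha2, hb2, aux_comm _ _ _ _ hcc hdd,
        ← map_commutatorElement, ← map_commutatorElement]
      refine Subgroup.mem_map_of_mem q (Subgroup.mem_map_of_mem p ?_)
      show ⁅w, x⁆ ∈ ⁅(⊤ : Subgroup (FreeGroup α)).lowerCentralSeries k, ⊤⁆
      exact Subgroup.commutator_mem_commutator hw (Subgroup.mem_top x)
  -- conclude
  intro z hz
  have hzmem : z ∈ (((((⊤ : Subgroup (FreeGroup α)).lowerCentralSeries m).map p : Subgroup π) : Set π) *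
      (((⊤ : Subgroup π).lowerCentralSeries (m + 1) : Subgroup π) : Set π)) := by
    rw [← Subgroup.mul_normal]; exact claim m le_rfl hz
  obtain ⟨u, hu, v, hv, huv⟩ := hzmem
  obtain ⟨w, hw, rfl⟩ := hu
  refine ⟨w, hw, ?_⟩
  have : (p w)⁻¹ * z = v := by rw [← huv]; group
  rw [this]; exact hv
end

section
/- Let F be a free group of finite rank, π a group, n ≥ 2, and let p : F → π be a 2-equivalence (i.e., p induces an isomorphism F/F₂ ≅ π/π₂). Suppose there exists a group homomorphism q : π → F/F_n such that the composition q∘p : F → F/F_n is a 2-equivalence (i.e., induces an isomorphism on the quotients by the second lower central series terms). Then p is an n-equivalence, i.e., p induces an isomorphism F/F_n ≅ π/π_n. -/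
/-! ### Auxiliary lemmas -/

open Subgroup QuotientGroup Function Pointwise
open scoped commutatorElement

section Helpers
variable {G : Type*} [Group G]

/-- A surjective endomorphism of a f.g. commutative group is injective. -/
lemma aux_inj_of_surj_endo {A : Type*} [CommGroup A] [Group.FG A] (φ : A →* A)
    (h : Function.Surjective φ) : Function.Injective φ := by
  haveI : Module.Finite ℤ (Additive A) := Module.Finite.iff_addGroup_fg.mpr inferInstance
  have hs : Function.Surjective ((MonoidHom.toAdditive φ).toIntLinearMap) := h
  exact IsNoetherian.injective_of_surjective_endomorphism _ hs

/-- Surjective homomorphisms map the lower central series onto the lower central series. -/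
lemma aux_lcs_map_eq {H : Type*} [Group H] (f : G →* H) (hf : Function.Surjective f) (k : ℕ) :
    ((⊤ : Subgroup G).lowerCentralSeries k).map f = (⊤ : Subgroup H).lowerCentralSeries k := by
  induction k with
  | zero =>
    simpa [← MonoidHom.range_eq_map] using MonoidHom.range_eq_top_of_surjective f hf
  | succ k ih =>
    show Subgroup.map f ⁅(⊤ : Subgroup G).lowerCentralSeries k, ⊤⁆ = ⁅(⊤ : Subgroup H).lowerCentralSeries k, ⊤⁆
    rw [Subgroup.map_commutator, ih, Subgroup.map_top_of_surjective f hf]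

lemma aux_lcs_quot_eq_bot (k : ℕ) :
    (⊤ : Subgroup (G ⧸ (⊤ : Subgroup G).lowerCentralSeries k)).lowerCentralSeries k = ⊥ := by
  rw [← aux_lcs_map_eq (QuotientGroup.mk' _) (QuotientGroup.mk'_surjective _) k,
    Subgroup.map_eq_bot_iff, QuotientGroup.ker_mk']

lemma aux_map_lcs_le_center (k : ℕ) :
    ((⊤ : Subgroup G).lowerCentralSeries k).map (QuotientGroup.mk' ((⊤ : Subgroup G).lowerCentralSeries (k+1)))
      ≤ Subgroup.center _ := by
  rintro _ ⟨w, hw, rfl⟩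
  rw [Subgroup.mem_center_iff]
  intro y
  obtain ⟨u, rfl⟩ := QuotientGroup.mk'_surjective _ y
  have hm : ⁅w, u⁆ ∈ (⊤ : Subgroup G).lowerCentralSeries (k+1) := by
    rw [Subgroup.lowerCentralSeries_succ]
    exact Subgroup.commutator_mem_commutator hw (Subgroup.mem_top u)
  have h1 : ⁅(QuotientGroup.mk' ((⊤ : Subgroup G).lowerCentralSeries (k+1))) w,
      (QuotientGroup.mk' ((⊤ : Subgroup G).lowerCentralSeries (k+1))) u⁆ = 1 := by
    rw [← map_commutatorElement]
    exact (QuotientGroup.eq_one_iff _).mpr hm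
  exact (commutatorElement_eq_one_iff_mul_comm.mp h1).symm

lemma aux_central_conj {c : G} (hc : c ∈ Subgroup.center G) (g : G) : g * c * g⁻¹ = c := by
  rw [Subgroup.mem_center_iff.mp hc g]; group

lemma aux_comm_mul_left_central {x₁ x₂ y : G} (h : ⁅x₂, y⁆ ∈ Subgroup.center G) :
    ⁅x₁ * x₂, y⁆ = ⁅x₂, y⁆ * ⁅x₁, y⁆ := by
  have key : ⁅x₁ * x₂, y⁆ = x₁ * ⁅x₂, y⁆ * x₁⁻¹ * ⁅x₁, y⁆ := by
    simp only [commutatorElement_def]; group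
  rw [key, aux_central_conj h x₁]

lemma aux_comm_inv_left_central {x y : G} (h : ⁅x, y⁆ ∈ Subgroup.center G) :
    ⁅x⁻¹, y⁆ = ⁅x, y⁆⁻¹ := by
  have key : ⁅x⁻¹, y⁆ = x⁻¹ * ⁅x, y⁆⁻¹ * x := by
    simp only [commutatorElement_def]; group
  rw [key, show x⁻¹ * ⁅x, y⁆⁻¹ * x = x⁻¹ * ⁅x, y⁆⁻¹ * (x⁻¹)⁻¹ by group,
    aux_central_conj (inv_mem h) x⁻¹]

lemma aux_comm_mul_right_central {x y₁ y₂ : G} (h : ⁅x, y₂⁆ ∈ Subgroup.center G) :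
    ⁅x, y₁ * y₂⁆ = ⁅x, y₁⁆ * ⁅x, y₂⁆ := by
  have key : ⁅x, y₁ * y₂⁆ = ⁅x, y₁⁆ * (y₁ * ⁅x, y₂⁆ * y₁⁻¹) := by
    simp only [commutatorElement_def]; group
  rw [key, aux_central_conj h y₁]

lemma aux_comm_inv_right_central {x y : G} (h : ⁅x, y⁆ ∈ Subgroup.center G) :
    ⁅x, y⁻¹⁆ = ⁅x, y⁆⁻¹ := by
  have key : ⁅x, y⁻¹⁆ = y⁻¹ * ⁅x, y⁆⁻¹ * (y⁻¹)⁻¹ := by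
    simp only [commutatorElement_def]; group
  rw [key, aux_central_conj (inv_mem h) y⁻¹]

lemma aux_commutator_mul_central {a b u v : G} (hu : u ∈ Subgroup.center G)
    (hv : v ∈ Subgroup.center G) : ⁅a * u, b * v⁆ = ⁅a, b⁆ := by
  have h1 : ⁅u, b * v⁆ = 1 :=
    (commutatorElement_eq_one_iff_mul_comm).mpr ((Subgroup.mem_center_iff.mp hu _).symm)
  have h2 : ⁅a, v⁆ = 1 := by
    rw [commutatorElement_eq_one_iff_mul_comm, Subgroup.mem_center_iff.mp hv a]
  rw [aux_comm_mul_left_central (h1 ▸ Subgroup.one_mem _), h1, one_mul,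
    aux_comm_mul_right_central (h2 ▸ Subgroup.one_mem _), h2, mul_one]

/-- In a nilpotent-like situation, a subgroup which is full modulo the commutator
subgroup is full modulo every term of the lower central series. -/
lemma aux_sup_lcs_eq_top {H : Subgroup G} (h : H ⊔ (⊤ : Subgroup G).lowerCentralSeries 1 = ⊤) :
    ∀ k, H ⊔ (⊤ : Subgroup G).lowerCentralSeries k = ⊤ := by
  intro k
  induction k with
  | zero => simp [Subgroup.lowerCentralSeries_zero]
  | succ k ih =>
    have key : (⊤ : Subgroup G).lowerCentralSeries 1 ≤ H ⊔ (⊤ : Subgroup G).lowerCentralSeries (k+1) := by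
      have h1 : (⊤ : Subgroup G).lowerCentralSeries 1 = ⁅(⊤ : Subgroup G), ⊤⁆ := by
        rw [Subgroup.top_lowerCentralSeries_one]; rfl
      rw [h1]
      rw [Subgroup.commutator_le]
      intro g₁ _ g₂ _
      have hg₁ : g₁ ∈ ((H : Set G) * ((⊤ : Subgroup G).lowerCentralSeries k : Set G)) := by
        rw [← Subgroup.mul_normal, ih]; trivial
      have hg₂ : g₂ ∈ ((H : Set G) * ((⊤ : Subgroup G).lowerCentralSeries k : Set G)) := by
        rw [← Subgroup.mul_normal, ih]; trivial
      obtain ⟨h₁, hh₁, z₁, hz₁, rfl⟩ := hg₁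
      obtain ⟨h₂, hh₂, z₂, hz₂, rfl⟩ := hg₂
      set ρ := QuotientGroup.mk' ((⊤ : Subgroup G).lowerCentralSeries (k+1))
      have hc₁ : ρ z₁ ∈ Subgroup.center _ :=
        aux_map_lcs_le_center k (Subgroup.mem_map_of_mem ρ hz₁)
      have hc₂ : ρ z₂ ∈ Subgroup.center _ :=
        aux_map_lcs_le_center k (Subgroup.mem_map_of_mem ρ hz₂)
      have heq : ρ ⁅h₁ * z₁, h₂ * z₂⁆ = ρ ⁅h₁, h₂⁆ := by
        rw [map_commutatorElement, map_commutatorElement, map_mul, map_mul,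
          aux_commutator_mul_central hc₁ hc₂]
      have hker : ⁅h₁ * z₁, h₂ * z₂⁆ * ⁅h₁, h₂⁆⁻¹ ∈ (⊤ : Subgroup G).lowerCentralSeries (k+1) := by
        rw [← QuotientGroup.ker_mk' ((⊤ : Subgroup G).lowerCentralSeries (k+1)), MonoidHom.mem_ker,
          map_mul, map_inv, heq, mul_inv_cancel]
      have hH : ⁅h₁, h₂⁆ ∈ H := by
        rw [commutatorElement_def]
        exact mul_mem (mul_mem (mul_mem hh₁ hh₂) (inv_mem hh₁)) (inv_mem hh₂)
      have : ⁅h₁ * z₁, h₂ * z₂⁆ = (⁅h₁ * z₁, h₂ * z₂⁆ * ⁅h₁, h₂⁆⁻¹) * ⁅h₁, h₂⁆ := by group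
      rw [this]
      exact mul_mem (Subgroup.mem_sup_right hker) (Subgroup.mem_sup_left hH)
    rw [eq_top_iff]
    exact h.symm.le.trans (sup_le le_sup_left key)

lemma aux_eq_top_of_lcs_bot {H : Subgroup G} (h1 : H ⊔ (⊤ : Subgroup G).lowerCentralSeries 1 = ⊤)
    {m : ℕ} (hm : (⊤ : Subgroup G).lowerCentralSeries m = ⊥) : H = ⊤ := by
  have := aux_sup_lcs_eq_top h1 m
  rwa [hm, sup_bot_eq] at this

/-- The graded quotients of the lower central series of a finitely generated group,
realized as (central) subgroups of the quotients, are finitely generated. -/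
lemma aux_graded_fg {S : Set G} (hSfin : S.Finite) (hS : Subgroup.closure S = ⊤) :
    ∀ k, (((⊤ : Subgroup G).lowerCentralSeries k).map
      (QuotientGroup.mk' ((⊤ : Subgroup G).lowerCentralSeries (k+1)))).FG := by
  intro k
  induction k with
  | zero =>
    haveI : Group.FG G := Group.fg_iff.mpr ⟨S, hS, hSfin⟩
    haveI : Group.FG (G ⧸ (⊤ : Subgroup G).lowerCentralSeries 1) :=
      Group.fg_of_surjective (QuotientGroup.mk'_surjective _)
    rw [Subgroup.lowerCentralSeries_zero, Subgroup.map_top_of_surjective _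
      (QuotientGroup.mk'_surjective _)]
    exact Group.fg_def.mp ‹_›
  | succ k ih =>
    set mk₁ := QuotientGroup.mk' ((⊤ : Subgroup G).lowerCentralSeries (k+1)) with hmk₁
    set mk₂ := QuotientGroup.mk' ((⊤ : Subgroup G).lowerCentralSeries (k+2)) with hmk₂
    -- extract a finite generating set of the image of `lcs k` in `G/lcs (k+1)` and lift it
    obtain ⟨V, hVclos, hVfin⟩ := (Subgroup.fg_iff _).mp ih
    have hVsub : V ⊆ ↑(((⊤ : Subgroup G).lowerCentralSeries k).map mk₁) := hVclos ▸ Subgroup.subset_closure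
    have hex : ∀ v : G ⧸ (⊤ : Subgroup G).lowerCentralSeries (k+1), ∃ t : G,
        v ∈ V → t ∈ (⊤ : Subgroup G).lowerCentralSeries k ∧ mk₁ t = v := by
      intro v
      by_cases hv : v ∈ V
      · obtain ⟨t, ht, rfl⟩ := hVsub hv
        exact ⟨t, fun _ => ⟨ht, rfl⟩⟩
      · exact ⟨1, fun h => absurd h hv⟩
    choose ℓ hℓ using hex
    set T : Set G := ℓ '' V with hT
    have hTfin : T.Finite := hVfin.image ℓ
    have hTsub : T ⊆ ↑((⊤ : Subgroup G).lowerCentralSeries k) := by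
      rintro _ ⟨v, hv, rfl⟩; exact (hℓ v hv).1
    have himg : mk₁ '' T = V := by
      apply Set.Subset.antisymm
      · rintro _ ⟨_, ⟨v, hv, rfl⟩, rfl⟩
        rw [(hℓ v hv).2]; exact hv
      · intro v hv
        exact ⟨ℓ v, ⟨v, hv, rfl⟩, (hℓ v hv).2⟩
    -- `lcs k ≤ ⟨T⟩ ⊔ lcs (k+1)`
    have halpha : (⊤ : Subgroup G).lowerCentralSeries k ≤
        Subgroup.closure T ⊔ (⊤ : Subgroup G).lowerCentralSeries (k+1) := by
      intro x hx
      have hx1 : mk₁ x ∈ Subgroup.map mk₁ (Subgroup.closure T) := by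
        rw [MonoidHom.map_closure, himg, hVclos]
        exact Subgroup.mem_map_of_mem _ hx
      obtain ⟨y, hy, hyx⟩ := hx1
      have hk : y⁻¹ * x ∈ (⊤ : Subgroup G).lowerCentralSeries (k+1) := by
        rw [← QuotientGroup.ker_mk' ((⊤ : Subgroup G).lowerCentralSeries (k+1)), MonoidHom.mem_ker,
          map_mul, map_inv]
        rw [hmk₁] at hyx
        rw [hyx, inv_mul_cancel]
      have hxeq : x = y * (y⁻¹ * x) := by group
      rw [hxeq]
      exact mul_mem (Subgroup.mem_sup_left hy) (Subgroup.mem_sup_right hk)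
    -- now work in `G ⧸ lcs (k+2)`
    set M' := Subgroup.map mk₂ ((⊤ : Subgroup G).lowerCentralSeries k) with hM'
    set N' := Subgroup.map mk₂ ((⊤ : Subgroup G).lowerCentralSeries (k+1)) with hN'
    have hN'cent : N' ≤ Subgroup.center _ := aux_map_lcs_le_center (k+1)
    have hcomm : ∀ x ∈ M', ∀ y, ⁅x, y⁆ ∈ Subgroup.center (G ⧸ (⊤ : Subgroup G).lowerCentralSeries (k+2)) := by
      rintro _ ⟨a, ha, rfl⟩ y
      obtain ⟨b, rfl⟩ := QuotientGroup.mk'_surjective _ y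
      have hab : ⁅a, b⁆ ∈ (⊤ : Subgroup G).lowerCentralSeries (k+1) := by
        rw [Subgroup.lowerCentralSeries_succ]
        exact Subgroup.commutator_mem_commutator ha (Subgroup.mem_top b)
      rw [← map_commutatorElement]
      exact hN'cent (Subgroup.mem_map_of_mem _ hab)
    set W : Set (G ⧸ (⊤ : Subgroup G).lowerCentralSeries (k+2)) :=
      (fun tp : G × G => ⁅mk₂ tp.1, mk₂ tp.2⁆) '' (T ×ˢ S) with hW
    have hWfin : W.Finite := (hTfin.prod hSfin).image _
    set C := Subgroup.closure W with hC
    have hCle : C ≤ N' := by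
      rw [hC, Subgroup.closure_le]
      rintro _ ⟨⟨t, s⟩, hts, rfl⟩
      obtain ⟨htT, hsS⟩ := hts
      show ⁅mk₂ t, mk₂ s⁆ ∈ N'
      rw [← map_commutatorElement]
      refine Subgroup.mem_map_of_mem _ ?_
      rw [Subgroup.lowerCentralSeries_succ]
      exact Subgroup.commutator_mem_commutator (hTsub htT) (Subgroup.mem_top s)
    set U : Set (G ⧸ (⊤ : Subgroup G).lowerCentralSeries (k+2)) := (mk₂ '' T) ∪ ↑N' with hU
    have hUle : Subgroup.closure U ≤ M' := by
      rw [Subgroup.closure_le]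
      apply Set.union_subset
      · rintro _ ⟨t, htT, rfl⟩
        exact Subgroup.mem_map_of_mem _ (hTsub htT)
      · exact Subgroup.map_mono (Subgroup.lowerCentralSeries_antitone ⊤ (Nat.le_succ k))
    have hM'le : M' ≤ Subgroup.closure U := by
      rintro _ ⟨a, ha, rfl⟩
      have h1 : mk₂ a ∈ Subgroup.map mk₂ (Subgroup.closure T ⊔ (⊤ : Subgroup G).lowerCentralSeries (k+1)) :=
        Subgroup.mem_map_of_mem _ (halpha ha)
      rw [Subgroup.map_sup, MonoidHom.map_closure] at h1
      rw [hU, Subgroup.closure_union, Subgroup.closure_eq]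
      exact h1
    have hKey : ∀ x ∈ Subgroup.closure U, ∀ y, ⁅x, y⁆ ∈ C := by
      intro x hx
      refine Subgroup.closure_induction
        (p := fun x _ => ∀ y, ⁅x, y⁆ ∈ C) ?_ ?_ ?_ ?_ hx
      · rintro x (⟨t, htT, rfl⟩ | hxN)
        · intro y
          have hyU : y ∈ Subgroup.closure (mk₂ '' S) := by
            rw [← MonoidHom.map_closure, hS,
              Subgroup.map_top_of_surjective _ (QuotientGroup.mk'_surjective _)]
            trivial
          have htM' : mk₂ t ∈ M' := Subgroup.mem_map_of_mem _ (hTsub htT)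
          refine Subgroup.closure_induction
            (p := fun y _ => ⁅mk₂ t, y⁆ ∈ C) ?_ ?_ ?_ ?_ hyU
          · rintro _ ⟨s, hsS, rfl⟩
            exact Subgroup.subset_closure ⟨(t, s), ⟨htT, hsS⟩, rfl⟩
          · show ⁅mk₂ t, (1 : G ⧸ (⊤ : Subgroup G).lowerCentralSeries (k+2))⁆ ∈ C
            rw [commutatorElement_one_right]; exact one_mem _
          · intro y₁ y₂ _ _ ih₁ ih₂
            rw [aux_comm_mul_right_central (hcomm _ htM' y₂)]
            exact mul_mem ih₁ ih₂
          · intro y _ ihy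
            rw [aux_comm_inv_right_central (hcomm _ htM' y)]
            exact inv_mem ihy
        · intro y
          have h1 : ⁅x, y⁆ = 1 := commutatorElement_eq_one_iff_mul_comm.mpr
            (Subgroup.mem_center_iff.mp (hN'cent hxN) y).symm
          rw [h1]; exact one_mem _
      · intro y; rw [commutatorElement_one_left]; exact one_mem _
      · intro x₁ x₂ _ hx₂ ih₁ ih₂ y
        rw [aux_comm_mul_left_central (hcomm x₂ (hUle hx₂) y)]
        exact mul_mem (ih₂ y) (ih₁ y)
      · intro x hx ihx y
        rw [aux_comm_inv_left_central (hcomm x (hUle hx) y)]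
        exact inv_mem (ihx y)
    have hfinal : N' = C := by
      apply le_antisymm ?_ hCle
      have hcommN : N' = ⁅M', ⊤⁆ := by
        rw [hN', show (⊤ : Subgroup G).lowerCentralSeries (k+1) = ⁅(⊤ : Subgroup G).lowerCentralSeries k, ⊤⁆ from
          Subgroup.lowerCentralSeries_succ _ k, Subgroup.map_commutator,
          Subgroup.map_top_of_surjective _ (QuotientGroup.mk'_surjective _)]
      rw [hcommN, Subgroup.commutator_le]
      intro x hxM y _
      exact hKey x (hM'le hxM) y
    exact (Subgroup.fg_iff _).mpr ⟨W, hfinal.symm, hWfin⟩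

/-- An endomorphism of a f.g. group which is surjective modulo the commutator
subgroup pulls back each term of the lower central series into itself. -/
lemma aux_key_lcs_preimage {S : Set G} (hSfin : S.Finite) (hS : Subgroup.closure S = ⊤)
    (f : G →* G) (hf : f.range ⊔ (⊤ : Subgroup G).lowerCentralSeries 1 = ⊤) :
    ∀ k, ∀ x : G, f x ∈ (⊤ : Subgroup G).lowerCentralSeries k → x ∈ (⊤ : Subgroup G).lowerCentralSeries k := by
  intro k
  induction k with
  | zero => intro x _; exact Subgroup.mem_top x
  | succ k ih =>
    intro x hx
    have hxk : x ∈ (⊤ : Subgroup G).lowerCentralSeries k :=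
      ih x (Subgroup.lowerCentralSeries_antitone ⊤ (Nat.le_succ k) hx)
    set mkk := QuotientGroup.mk' ((⊤ : Subgroup G).lowerCentralSeries (k+1)) with hmkk
    set fQ := inducedQuotMap f (k+1) with hfQ
    have hcompat : ∀ g : G, fQ (mkk g) = mkk (f g) := fun g => rfl
    -- fQ is surjective
    have h1 : fQ.range ⊔ (⊤ : Subgroup (G ⧸ (⊤ : Subgroup G).lowerCentralSeries (k+1))).lowerCentralSeries 1 = ⊤ := by
      rw [eq_top_iff]
      intro ybar _
      obtain ⟨g, rfl⟩ := QuotientGroup.mk'_surjective _ ybar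
      have hg : g ∈ ((f.range : Set G) * ((⊤ : Subgroup G).lowerCentralSeries 1 : Set G)) := by
        rw [← Subgroup.mul_normal, hf]; trivial
      obtain ⟨w, hw, c, hc, rfl⟩ := hg
      obtain ⟨y, rfl⟩ := hw
      rw [map_mul]
      refine mul_mem (Subgroup.mem_sup_left ⟨mkk y, hcompat y⟩)
        (Subgroup.mem_sup_right (lcs_map_le mkk 1 (Subgroup.mem_map_of_mem _ hc)))
    have hsurj : Function.Surjective fQ :=
      MonoidHom.range_eq_top.mp (aux_eq_top_of_lcs_bot h1 (aux_lcs_quot_eq_bot (k+1)))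
    -- the central subgroup M
    set M := Subgroup.map mkk ((⊤ : Subgroup G).lowerCentralSeries k) with hM
    have hMlcs : M = (⊤ : Subgroup (G ⧸ (⊤ : Subgroup G).lowerCentralSeries (k+1))).lowerCentralSeries k :=
      aux_lcs_map_eq mkk (QuotientGroup.mk'_surjective _) k
    have hMmap : ∀ m ∈ M, fQ m ∈ M := by
      rintro _ ⟨a, ha, rfl⟩
      rw [hcompat a]
      exact Subgroup.mem_map_of_mem _ (lcs_map_le f k (Subgroup.mem_map_of_mem f ha))
    set φ := MonoidHom.codRestrict (fQ.domRestrict M) M (fun m => hMmap m m.2) with hφ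
    have hφsurj : Function.Surjective φ := by
      rintro ⟨m, hm⟩
      have hm' : m ∈ Subgroup.map fQ ((⊤ : Subgroup (G ⧸ (⊤ : Subgroup G).lowerCentralSeries (k+1))).lowerCentralSeries k) := by
        rw [aux_lcs_map_eq fQ hsurj k]
        exact hMlcs ▸ hm
      obtain ⟨y, hy, rfl⟩ := hm'
      exact ⟨⟨y, hMlcs ▸ hy⟩, Subtype.ext rfl⟩
    have hMcent : M ≤ Subgroup.center _ := aux_map_lcs_le_center k
    letI : CommGroup ↥M :=
      { M.toGroup with
        mul_comm := fun a b =>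
          Subtype.ext ((Subgroup.mem_center_iff.mp (hMcent a.2) b).symm) }
    haveI : Group.FG ↥M := (Group.fg_iff_subgroup_fg M).mpr (aux_graded_fg hSfin hS k)
    have hφinj : Function.Injective φ := aux_inj_of_surj_endo φ hφsurj
    -- conclude
    have hmem : mkk x ∈ M := Subgroup.mem_map_of_mem _ hxk
    have hone : φ ⟨mkk x, hmem⟩ = 1 := by
      refine Subtype.ext ?_
      show fQ (mkk x) = 1
      rw [hcompat x]
      exact (QuotientGroup.eq_one_iff _).mpr hx
    have := hφinj (hone.trans (map_one φ).symm)
    have hmk1 : mkk x = 1 := congrArg Subtype.val this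
    exact (QuotientGroup.eq_one_iff _).mp hmk1

end Helpers

/-- if `p : F → π` is a 2-equivalence from a free group of finite rank
and there is `q : π → F/F_n` with `q∘p` a 2-equivalence, then `p` is an
`n`-equivalence.  (A `k`-equivalence means `inducedQuotMap · (k-1)` is bijective;
`F/F₂` is the quotient by `lowerCentralSeries F 1` and `F/F_n` by
`lowerCentralSeries F (n-1)`.) -/
theorem n_equivalence_of_lift (r : ℕ) {π : Type*} [Group π] (n : ℕ) (hn : 2 ≤ n)
    (p : FreeGroup (Fin r) →* π)
    (hp2 : Function.Bijective (inducedQuotMap p 1))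
    (q : π →* FreeGroup (Fin r) ⧸ (⊤ : Subgroup (FreeGroup (Fin r))).lowerCentralSeries (n - 1))
    (hqp : Function.Bijective (inducedQuotMap (q.comp p) 1)) :
    Function.Bijective (inducedQuotMap p (n - 1)) := by
  set F := FreeGroup (Fin r) with hF
  have hm1 : 1 ≤ n - 1 := by omega
  set mkm := QuotientGroup.mk' ((⊤ : Subgroup F).lowerCentralSeries (n-1)) with hmkm
  set g := q.comp p with hg
  -- lift g to an endomorphism f of the free group
  set f : F →* F := FreeGroup.lift (fun i =>
    Classical.choose (QuotientGroup.mk'_surjective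
      ((⊤ : Subgroup F).lowerCentralSeries (n-1)) (g (FreeGroup.of i)))) with hf
  have hlift : ∀ x : F, mkm (f x) = g x := by
    have hcomp : mkm.comp f = g := by
      apply FreeGroup.ext_hom
      intro i
      show mkm (f (FreeGroup.of i)) = g (FreeGroup.of i)
      rw [hf, FreeGroup.lift_apply_of]
      exact Classical.choose_spec (QuotientGroup.mk'_surjective
        ((⊤ : Subgroup F).lowerCentralSeries (n-1)) (g (FreeGroup.of i)))
    intro x
    exact DFunLike.congr_fun hcomp x
  -- the free group is generated by the finite set of generators
  have hSfin : (Set.range (FreeGroup.of : Fin r → F)).Finite := Set.finite_range _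
  have hStop : Subgroup.closure (Set.range (FreeGroup.of : Fin r → F)) = ⊤ :=
    FreeGroup.closure_range_of (Fin r)
  -- f is surjective modulo the commutator subgroup
  have hf_range : f.range ⊔ (⊤ : Subgroup F).lowerCentralSeries 1 = ⊤ := by
    rw [eq_top_iff]
    intro x _
    obtain ⟨zbar, hz⟩ := hqp.2 ((QuotientGroup.mk' ((⊤ : Subgroup
      (F ⧸ (⊤ : Subgroup F).lowerCentralSeries (n-1))).lowerCentralSeries 1)) (mkm x))
    obtain ⟨z, rfl⟩ := QuotientGroup.mk'_surjective ((⊤ : Subgroup F).lowerCentralSeries 1) zbar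
    have hz' : (QuotientGroup.mk' ((⊤ : Subgroup (F ⧸ (⊤ : Subgroup F).lowerCentralSeries (n-1))).lowerCentralSeries 1))
        (g z) = (QuotientGroup.mk' _) (mkm x) := hz
    obtain ⟨d, hd, hdz⟩ := (QuotientGroup.mk'_eq_mk' _).mp hz'
    have hd' : d ∈ Subgroup.map mkm ((⊤ : Subgroup F).lowerCentralSeries 1) := by
      rw [aux_lcs_map_eq mkm (QuotientGroup.mk'_surjective _) 1]
      exact hd
    obtain ⟨e, he, rfl⟩ := hd'
    have : mkm (f z * e) = mkm x := by
      rw [map_mul, hlift z]; exact hdz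
    obtain ⟨w, hw, hwx⟩ := (QuotientGroup.mk'_eq_mk' _).mp this
    have hxeq : x = f z * (e * w) := by rw [← hwx]; group
    rw [hxeq]
    refine mul_mem (Subgroup.mem_sup_left ⟨z, rfl⟩) (Subgroup.mem_sup_right ?_)
    exact mul_mem he (Subgroup.lowerCentralSeries_antitone ⊤ hm1 hw)
  constructor
  · -- injectivity
    rw [injective_iff_map_eq_one]
    intro a ha
    obtain ⟨x, rfl⟩ := QuotientGroup.mk'_surjective ((⊤ : Subgroup F).lowerCentralSeries (n-1)) a
    have hpx : p x ∈ (⊤ : Subgroup π).lowerCentralSeries (n-1) := by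
      have h5 : (QuotientGroup.mk' ((⊤ : Subgroup π).lowerCentralSeries (n-1))) (p x) = 1 := ha
      exact (QuotientGroup.eq_one_iff (p x)).mp h5
    have hgx : g x = 1 := by
      have h1 : g x ∈ Subgroup.map q ((⊤ : Subgroup π).lowerCentralSeries (n-1)) :=
        Subgroup.mem_map_of_mem q hpx
      have h2 : Subgroup.map q ((⊤ : Subgroup π).lowerCentralSeries (n-1)) ≤
          (⊤ : Subgroup (F ⧸ (⊤ : Subgroup F).lowerCentralSeries (n-1))).lowerCentralSeries (n-1) := lcs_map_le q (n-1)
      have h3 := h2 h1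
      rw [aux_lcs_quot_eq_bot (n-1)] at h3
      exact h3
    have hfx : f x ∈ (⊤ : Subgroup F).lowerCentralSeries (n-1) := by
      have h4 : mkm (f x) = 1 := by rw [hlift x, hgx]
      exact (QuotientGroup.eq_one_iff (f x)).mp h4
    have hx : x ∈ (⊤ : Subgroup F).lowerCentralSeries (n-1) :=
      aux_key_lcs_preimage hSfin hStop f hf_range (n-1) x hfx
    exact (QuotientGroup.eq_one_iff x).mpr hx
  · -- surjectivity
    have hsup : (inducedQuotMap p (n-1)).range ⊔
        (⊤ : Subgroup (π ⧸ (⊤ : Subgroup π).lowerCentralSeries (n-1))).lowerCentralSeries 1 = ⊤ := by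
      rw [eq_top_iff]
      intro ybar _
      obtain ⟨y, rfl⟩ := QuotientGroup.mk'_surjective ((⊤ : Subgroup π).lowerCentralSeries (n-1)) ybar
      obtain ⟨xbar, hx⟩ := hp2.2 ((QuotientGroup.mk' ((⊤ : Subgroup π).lowerCentralSeries 1)) y)
      obtain ⟨x, rfl⟩ := QuotientGroup.mk'_surjective ((⊤ : Subgroup F).lowerCentralSeries 1) xbar
      have hx' : (QuotientGroup.mk' ((⊤ : Subgroup π).lowerCentralSeries 1)) (p x) =
        (QuotientGroup.mk' _) y := hx
      obtain ⟨c, hc, hcy⟩ := (QuotientGroup.mk'_eq_mk' _).mp hx'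
      rw [← hcy, map_mul]
      refine mul_mem (Subgroup.mem_sup_left ?_) (Subgroup.mem_sup_right ?_)
      · exact ⟨(QuotientGroup.mk' ((⊤ : Subgroup F).lowerCentralSeries (n-1))) x, rfl⟩
      · exact lcs_map_le (QuotientGroup.mk' _) 1 (Subgroup.mem_map_of_mem _ hc)
    exact MonoidHom.range_eq_top.mp (aux_eq_top_of_lcs_bot hsup (aux_lcs_quot_eq_bot (n-1)))
end
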